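/- For any Riemannian manifold (M^n, g) with n ≥ 3, the tensor R̆_ij - |Rm|²/n g_ij, where R̆_ij = R_ipqr R_jpqr, equals W̆_ij - |W|²/n g_ij + 4/(n-2) W_ipjq R̊_pq + 2(n-4)/(n-2)² R̊_iq R̊_qj + 4R/(n(n-1)) R̊_ij - 2(n-4)/(n(n-2)²) |R̊ic|² g_ij, where W is the Weyl tensor, W̆_ij = W_ipqr W_jpqr, R̊ic is the traceless Ricci tensor, and R is the scalar curvature. -/

import Mathlib

private lemma aaContr (n : ℕ) (E : Fin n → Fin n → ℝ) (a b : ℝ) (i j : Fin n)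
    (kd : Fin n → Fin n → ℝ)
    (hkd : ∀ i j, kd i j = if i = j then 1 else 0)
    (hEs : ∀ i j, E i j = E j i)
    (hEt : ∑ p : Fin n, E p p = 0) :
    (∑ p : Fin n, ∑ q : Fin n, ∑ r : Fin n,
      (a*(E i q * kd p r + E p r * kd i q - E i r * kd p q - E p q * kd i r)
        + b*(kd i q * kd p r - kd i r * kd p q))
      * (a*(E j q * kd p r + E p r * kd j q - E j r * kd p q - E p q * kd j r)
        + b*(kd j q * kd p r - kd j r * kd p q)))
    = a^2*(2*((n:ℝ)-4)*(∑ q : Fin n, E i q * E q j)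
            + 2*(∑ c : Fin n, ∑ d : Fin n, (E c d)^2) * kd i j)
      + 4*a*b*((n:ℝ)-2)*E i j + 2*((n:ℝ)-1)*b^2*kd i j := by
  have htr1 : ∀ c : ℝ, ∑ p : Fin n, E p p * c = 0 := by
    intro c; rw [← Finset.sum_mul, hEt, zero_mul]
  have htr2 : ∀ c : ℝ, ∑ p : Fin n, c * E p p = 0 := by
    intro c; rw [← Finset.mul_sum, hEt, mul_zero]
  have h1 : ∀ (c d : ℝ) (f g : Fin n → ℝ),
      ∑ x : Fin n, c * f x * d * g x = (c*d) * ∑ x : Fin n, f x * g x := by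
    intro c d f g; rw [Finset.mul_sum]; exact Finset.sum_congr rfl fun x _ => by ring
  have h2 : ∀ (c : ℝ) (f g : Fin n → ℝ),
      ∑ x : Fin n, c * f x * g x = c * ∑ x : Fin n, f x * g x := by
    intro c f g; rw [Finset.mul_sum]; exact Finset.sum_congr rfl fun x _ => by ring
  have h3 : ∀ (c : ℝ) (f g : Fin n → ℝ),
      ∑ x : Fin n, f x * c * g x = c * ∑ x : Fin n, f x * g x := by
    intro c f g; rw [Finset.mul_sum]; exact Finset.sum_congr rfl fun x _ => by ring
  have h4 : ∀ (c d : ℝ) (f g : Fin n → ℝ),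
      ∑ x : Fin n, c * f x * (d * g x) = (c*d) * ∑ x : Fin n, f x * g x := by
    intro c d f g; rw [Finset.mul_sum]; exact Finset.sum_congr rfl fun x _ => by ring
  have h5 : ∀ (c d : ℝ) (f g : Fin n → ℝ),
      ∑ x : Fin n, f x * c * (d * g x) = (c*d) * ∑ x : Fin n, f x * g x := by
    intro c d f g; rw [Finset.mul_sum]; exact Finset.sum_congr rfl fun x _ => by ring
  have h6 : ∀ (c : ℝ) (f g : Fin n → ℝ),
      ∑ x : Fin n, f x * (c * g x) = c * ∑ x : Fin n, f x * g x := by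
    intro c f g; rw [Finset.mul_sum]; exact Finset.sum_congr rfl fun x _ => by ring
  have hsum2 : ∑ x : Fin n, E x j * E i x = ∑ x : Fin n, E i x * E x j := by
    exact Finset.sum_congr rfl fun x _ => by ring
  have hswap1 : ∀ x, E j x = E x j := fun x => hEs j x
  have hswap2 : ∀ x, E x i = E i x := fun x => hEs x i
  have hite2 : ∀ (k l : Fin n) (t : ℝ), (if k = l then t else 0) = t * kd k l := by
    intro k l t; rw [hkd]; split <;> simp
  simp only [hkd]
  simp [mul_ite, ite_mul, mul_add, add_mul, mul_sub, sub_mul,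
    Finset.sum_add_distrib, Finset.sum_sub_distrib, Finset.mul_sum, Finset.sum_mul,
    htr1, htr2, hEt, Finset.sum_ite_eq, Finset.sum_ite_eq']
  simp only [pow_two, hswap1, hswap2, h1, h2, h3, h4, h5, h6, hsum2, ← Finset.mul_sum,
    htr1, htr2, hEt, mul_zero, zero_mul, hite2]
  ring

private lemma waContr (n : ℕ) (W : Fin n → Fin n → Fin n → Fin n → ℝ)
    (E : Fin n → Fin n → ℝ) (a b : ℝ) (i j : Fin n)
    (kd : Fin n → Fin n → ℝ)
    (hkd : ∀ i j, kd i j = if i = j then 1 else 0)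
    (hT1 : ∀ u v, ∑ p : Fin n, W u p v p = 0)
    (hT2 : ∀ u v, ∑ p : Fin n, W u p p v = 0)
    (hWa : ∀ i j k l, W i j k l = - W i j l k) :
    (∑ p : Fin n, ∑ q : Fin n, ∑ r : Fin n,
      W i p q r *
      (a*(E j q * kd p r + E p r * kd j q - E j r * kd p q - E p q * kd j r)
        + b*(kd j q * kd p r - kd j r * kd p q)))
    = (2*a) * ∑ p : Fin n, ∑ q : Fin n, W i p j q * E p q := by
  have hT1a : ∀ u v (c : ℝ), ∑ p : Fin n, W u p v p * c = 0 := by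
    intro u v c; rw [← Finset.sum_mul, hT1, zero_mul]
  have hT1b : ∀ u v (c : ℝ), ∑ p : Fin n, c * W u p v p = 0 := by
    intro u v c; rw [← Finset.mul_sum, hT1, mul_zero]
  have hT2a : ∀ u v (c : ℝ), ∑ p : Fin n, W u p p v * c = 0 := by
    intro u v c; rw [← Finset.sum_mul, hT2, zero_mul]
  have hT2b : ∀ u v (c : ℝ), ∑ p : Fin n, c * W u p p v = 0 := by
    intro u v c; rw [← Finset.mul_sum, hT2, mul_zero]
  have hx : ∀ p q, W i p q j = - W i p j q := fun p q => by
    rw [hWa i p j q]; ring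
  simp only [hkd]
  simp [mul_ite, ite_mul, mul_add, add_mul, mul_sub, sub_mul,
    Finset.sum_add_distrib, Finset.sum_sub_distrib, Finset.mul_sum, Finset.sum_mul,
    Finset.sum_ite_eq, Finset.sum_ite_eq', hx,
    hT1a, hT1b, hT2a, hT2b, hT1, hT2]
  have hz1 : ∑ x : Fin n, ∑ x_1 : Fin n, W i x x_1 x * (a * E j x_1) = 0 := by
    rw [Finset.sum_comm]; simp [hT1a]
  have hz1' : ∑ x : Fin n, ∑ x_1 : Fin n, W i x x_1 x * E j x_1 = 0 := by
    rw [Finset.sum_comm]; simp [hT1a]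
  have hz3' : ∑ x : Fin n, ∑ x_1 : Fin n, W i x x x_1 * E j x_1 = 0 := by
    rw [Finset.sum_comm]; simp [hT2a]
  have hz3 : ∑ x : Fin n, ∑ x_1 : Fin n, W i x x x_1 * (a * E j x_1) = 0 := by
    rw [Finset.sum_comm]; simp [hT2a]
  have h6 : ∀ (c : ℝ) (f g : Fin n → ℝ),
      ∑ x : Fin n, f x * (c * g x) = c * ∑ x : Fin n, f x * g x := by
    intro c f g; rw [Finset.mul_sum]; exact Finset.sum_congr rfl fun x _ => by ring
  simp only [hz1, hz3, h6, ← Finset.mul_sum, hz1', hz3', mul_zero]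
  ring

set_option maxHeartbeats 2000000 in
theorem weakly_einstein_defect_identity
    (n : ℕ) (hn : 3 ≤ n)
    (Rm W : Fin n → Fin n → Fin n → Fin n → ℝ)
    (Ric E : Fin n → Fin n → ℝ) (R : ℝ)
    (kd : Fin n → Fin n → ℝ)
    (hkd : ∀ i j, kd i j = if i = j then 1 else 0)
    (hRm1 : ∀ i j k l, Rm i j k l = - Rm j i k l)
    (hRm2 : ∀ i j k l, Rm i j k l = - Rm i j l k)
    (hRm3 : ∀ i j k l, Rm i j k l = Rm k l i j)
    (hRm4 : ∀ i j k l, Rm i j k l + Rm i k l j + Rm i l j k = 0)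
    (hRic : ∀ i j, Ric i j = ∑ p : Fin n, Rm i p j p)
    (hR : R = ∑ i : Fin n, Ric i i)
    (hW : ∀ i j k l, Rm i j k l = W i j k l
        + (1 / ((n : ℝ) - 2)) * (Ric i k * kd j l + Ric j l * kd i k
            - Ric i l * kd j k - Ric j k * kd i l)
        - (R / (((n : ℝ) - 1) * ((n : ℝ) - 2))) * (kd j l * kd i k - kd i l * kd j k))
    (hE : ∀ i j, E i j = Ric i j - (R / (n : ℝ)) * kd i j) :
    ∀ i j : Fin n,
      (∑ p : Fin n, ∑ q : Fin n, ∑ r : Fin n, Rm i p q r * Rm j p q r)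
          - ((∑ a : Fin n, ∑ b : Fin n, ∑ c : Fin n, ∑ d : Fin n,
              (Rm a b c d) ^ 2) / (n : ℝ)) * kd i j
        = (∑ p : Fin n, ∑ q : Fin n, ∑ r : Fin n, W i p q r * W j p q r)
          - ((∑ a : Fin n, ∑ b : Fin n, ∑ c : Fin n, ∑ d : Fin n,
              (W a b c d) ^ 2) / (n : ℝ)) * kd i j
          + (4 / ((n : ℝ) - 2)) * (∑ p : Fin n, ∑ q : Fin n, W i p j q * E p q)
          + (2 * ((n : ℝ) - 4) / ((n : ℝ) - 2) ^ 2) * (∑ q : Fin n, E i q * E q j)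
          + (4 * R / ((n : ℝ) * ((n : ℝ) - 1))) * E i j
          - (2 * ((n : ℝ) - 4) / ((n : ℝ) * ((n : ℝ) - 2) ^ 2))
              * (∑ a : Fin n, ∑ b : Fin n, (E a b) ^ 2) * kd i j := by
  have h3n : (3:ℝ) ≤ (n:ℝ) := by exact_mod_cast hn
  have hn0 : (n:ℝ) ≠ 0 := by linarith
  have hn1 : (n:ℝ) - 1 ≠ 0 := by intro h; linarith
  have hn2 : (n:ℝ) - 2 ≠ 0 := by intro h; linarith
  have hkds : ∀ u v, kd u v = kd v u := by
    intro u v; rcases eq_or_ne u v with h|h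
    · subst h; rfl
    · simp [hkd, h, h.symm]
  have hRicS : ∀ u v, Ric u v = Ric v u := by
    intro u v; rw [hRic, hRic]; exact Finset.sum_congr rfl fun p _ => hRm3 u p v p
  have hEs : ∀ u v, E u v = E v u := by
    intro u v; rw [hE, hE, hRicS u v, hkds u v]
  have hkdd : ∑ p : Fin n, kd p p = (n:ℝ) := by
    simp [hkd]
  have hEt : ∑ p : Fin n, E p p = 0 := by
    simp only [hE]
    rw [Finset.sum_sub_distrib, ← hR, ← Finset.mul_sum, hkdd]
    field_simp
    ring
  have hRicE : ∀ u v, Ric u v = E u v + (R/(n:ℝ)) * kd u v := by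
    intro u v; rw [hE]; ring
  have hWd : ∀ p q r s, W p q r s = Rm p q r s
      - ((1/((n:ℝ)-2))*(E p r * kd q s + E q s * kd p r - E p s * kd q r - E q r * kd p s)
         + (R/((n:ℝ)*((n:ℝ)-1)))*(kd p r * kd q s - kd p s * kd q r)) := by
    intro p q r s
    rw [hW p q r s, hRicE p r, hRicE q s, hRicE p s, hRicE q r]
    field_simp
    ring
  have hWa : ∀ p q r s, W p q r s = - W p q s r := by
    intro p q r s
    rw [hWd p q r s, hWd p q s r]
    linear_combination hRm2 p q r s
  have hWa1 : ∀ p q r s, W p q r s = - W q p r s := by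
    intro p q r s
    rw [hWd p q r s, hWd q p r s]
    linear_combination hRm1 p q r s
  have hWs : ∀ p q r s, W p q r s = W r s p q := by
    intro p q r s
    rw [hWd p q r s, hWd r s p q]
    linear_combination hRm3 p q r s
      - (1/((n:ℝ)-2))*(kd q s)*(hEs p r) - (1/((n:ℝ)-2))*(E r p)*(hkds q s)
      - (1/((n:ℝ)-2))*(kd p r)*(hEs q s) - (1/((n:ℝ)-2))*(E s q)*(hkds p r)
      + (1/((n:ℝ)-2))*(kd q r)*(hEs p s) + (1/((n:ℝ)-2))*(E s p)*(hkds q r)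
      + (1/((n:ℝ)-2))*(kd p s)*(hEs q r) + (1/((n:ℝ)-2))*(E r q)*(hkds p s)
      - (R/((n:ℝ)*((n:ℝ)-1)))*(kd q s)*(hkds p r) - (R/((n:ℝ)*((n:ℝ)-1)))*(kd r p)*(hkds q s)
      + (R/((n:ℝ)*((n:ℝ)-1)))*(kd q r)*(hkds p s) + (R/((n:ℝ)*((n:ℝ)-1)))*(kd s p)*(hkds q r)
  have htr1 : ∀ c : ℝ, ∑ p : Fin n, E p p * c = 0 := by
    intro c; rw [← Finset.sum_mul, hEt, zero_mul]
  have htr2 : ∀ c : ℝ, ∑ p : Fin n, c * E p p = 0 := by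
    intro c; rw [← Finset.mul_sum, hEt, mul_zero]
  have hT1 : ∀ u v, ∑ p : Fin n, W u p v p = 0 := by
    intro u v
    simp only [hWd, hkd]
    simp [mul_ite, ite_mul, mul_add, add_mul, mul_sub, sub_mul,
      Finset.sum_add_distrib, Finset.sum_sub_distrib, Finset.mul_sum, Finset.sum_mul,
      htr1, htr2, hEt, Finset.sum_ite_eq, Finset.sum_ite_eq']
    rw [← hRic u v, hRicE u v, hkd u v]
    have hq : (n:ℝ)*(n:ℝ) - (n:ℝ) ≠ 0 := by nlinarith
    have hq2 : -(n:ℝ) + (n:ℝ)^2 ≠ 0 := by nlinarith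
    split_ifs with h <;> field_simp <;> ring
  have hRmT : ∀ u v, ∑ p : Fin n, Rm u p p v = - Ric u v := by
    intro u v; rw [hRic, ← Finset.sum_neg_distrib]
    exact Finset.sum_congr rfl fun p _ => by linear_combination hRm2 u p p v
  have hT2 : ∀ u v, ∑ p : Fin n, W u p p v = 0 := by
    intro u v
    simp only [hWd, hkd]
    simp [mul_ite, ite_mul, mul_add, add_mul, mul_sub, sub_mul,
      Finset.sum_add_distrib, Finset.sum_sub_distrib, Finset.mul_sum, Finset.sum_mul,
      htr1, htr2, hEt, Finset.sum_ite_eq, Finset.sum_ite_eq']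
    rw [hRmT u v, hRicE u v, hkd u v]
    have hq : (n:ℝ)*(n:ℝ) - (n:ℝ) ≠ 0 := by nlinarith
    have hq2 : -(n:ℝ) + (n:ℝ)^2 ≠ 0 := by nlinarith
    split_ifs with h <;> field_simp <;> ring
  have hT3 : ∀ u v, ∑ p : Fin n, W p u p v = 0 := by
    intro u v; rw [← hT1 u v]
    exact Finset.sum_congr rfl fun p _ => by
      linear_combination (hWa1 p u p v) - (hWa u p p v)
  have hswapW : ∀ u v, (∑ p : Fin n, ∑ q : Fin n, W v p u q * E p q)
      = ∑ p : Fin n, ∑ q : Fin n, W u p v q * E p q := by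
    intro u v; rw [Finset.sum_comm]
    exact Finset.sum_congr rfl fun p _ => Finset.sum_congr rfl fun q _ => by
      rw [hWs v q u p, hEs q p]
  have hRmWX : ∀ i p q r, Rm i p q r = W i p q r
      + ((1/((n:ℝ)-2))*(E i q * kd p r + E p r * kd i q - E i r * kd p q - E p q * kd i r)
         + (R/((n:ℝ)*((n:ℝ)-1)))*(kd i q * kd p r - kd i r * kd p q)) := by
    intro i p q r; linear_combination (-1 : ℝ) * hWd i p q r
  have key : ∀ u v, (∑ p : Fin n, ∑ q : Fin n, ∑ r : Fin n, Rm u p q r * Rm v p q r)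
      = (∑ p : Fin n, ∑ q : Fin n, ∑ r : Fin n, W u p q r * W v p q r)
        + (4*(1/((n:ℝ)-2))) * (∑ p : Fin n, ∑ q : Fin n, W u p v q * E p q)
        + (1/((n:ℝ)-2))^2*(2*((n:ℝ)-4)*(∑ q : Fin n, E u q * E q v)
            + 2*(∑ c : Fin n, ∑ d : Fin n, (E c d)^2) * kd u v)
        + 4*(1/((n:ℝ)-2))*(R/((n:ℝ)*((n:ℝ)-1)))*((n:ℝ)-2)*E u v + 2*((n:ℝ)-1)*(R/((n:ℝ)*((n:ℝ)-1)))^2*kd u v := by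
    intro u v
    have e1 : ∀ p q r, Rm u p q r * Rm v p q r
        = W u p q r * W v p q r
        + W u p q r * ((1/((n:ℝ)-2))*(E v q * kd p r + E p r * kd v q - E v r * kd p q - E p q * kd v r)
            + (R/((n:ℝ)*((n:ℝ)-1)))*(kd v q * kd p r - kd v r * kd p q))
        + W v p q r * ((1/((n:ℝ)-2))*(E u q * kd p r + E p r * kd u q - E u r * kd p q - E p q * kd u r)
            + (R/((n:ℝ)*((n:ℝ)-1)))*(kd u q * kd p r - kd u r * kd p q))
        + ((1/((n:ℝ)-2))*(E u q * kd p r + E p r * kd u q - E u r * kd p q - E p q * kd u r)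
            + (R/((n:ℝ)*((n:ℝ)-1)))*(kd u q * kd p r - kd u r * kd p q))
          * ((1/((n:ℝ)-2))*(E v q * kd p r + E p r * kd v q - E v r * kd p q - E p q * kd v r)
            + (R/((n:ℝ)*((n:ℝ)-1)))*(kd v q * kd p r - kd v r * kd p q)) := by
      intro p q r; rw [hRmWX u p q r, hRmWX v p q r]; ring
    simp only [e1, Finset.sum_add_distrib]
    rw [waContr n W E (1/((n:ℝ)-2)) (R/((n:ℝ)*((n:ℝ)-1))) u v kd hkd hT1 hT2 hWa,
        waContr n W E (1/((n:ℝ)-2)) (R/((n:ℝ)*((n:ℝ)-1))) v u kd hkd hT1 hT2 hWa,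
        aaContr n E (1/((n:ℝ)-2)) (R/((n:ℝ)*((n:ℝ)-1))) u v kd hkd hEs hEt,
        hswapW u v]
    ring
  have hFtr : (∑ u : Fin n, ∑ q : Fin n, E u q * E q u)
      = ∑ c : Fin n, ∑ d : Fin n, (E c d)^2 :=
    Finset.sum_congr rfl fun u _ => Finset.sum_congr rfl fun q _ => by
      rw [hEs q u]; ring
  have z1 : (∑ u : Fin n, ∑ p : Fin n, ∑ q : Fin n, W u p u q * E p q) = 0 := by
    rw [Finset.sum_comm]
    refine Finset.sum_eq_zero fun p _ => ?_
    rw [Finset.sum_comm]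
    refine Finset.sum_eq_zero fun q _ => ?_
    rw [← Finset.sum_mul, hT3 p q, zero_mul]
  have hsq : (∑ a : Fin n, ∑ b : Fin n, ∑ c : Fin n, ∑ d : Fin n, (Rm a b c d) ^ 2)
      = (∑ a : Fin n, ∑ b : Fin n, ∑ c : Fin n, ∑ d : Fin n, (W a b c d) ^ 2)
        + 4*((1/((n:ℝ)-2)))^2*((n:ℝ)-2)*(∑ c : Fin n, ∑ d : Fin n, (E c d)^2)
        + 2*(n:ℝ)*((n:ℝ)-1)*((R/((n:ℝ)*((n:ℝ)-1))))^2 := by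
    have step : ∀ u : Fin n,
        (∑ p : Fin n, ∑ q : Fin n, ∑ r : Fin n, (Rm u p q r)^2)
        = (∑ p : Fin n, ∑ q : Fin n, ∑ r : Fin n, W u p q r * W u p q r)
          + (4*(1/((n:ℝ)-2))) * (∑ p : Fin n, ∑ q : Fin n, W u p u q * E p q)
          + (1/((n:ℝ)-2))^2*(2*((n:ℝ)-4)*(∑ q : Fin n, E u q * E q u)
              + 2*(∑ c : Fin n, ∑ d : Fin n, (E c d)^2) * kd u u)
          + 4*(1/((n:ℝ)-2))*(R/((n:ℝ)*((n:ℝ)-1)))*((n:ℝ)-2)*E u u + 2*((n:ℝ)-1)*(R/((n:ℝ)*((n:ℝ)-1)))^2*kd u u := by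
      intro u
      rw [← key u u]
      simp only [pow_two]
    rw [Finset.sum_congr rfl (fun u _ => step u)]
    rw [Finset.sum_add_distrib, Finset.sum_add_distrib, Finset.sum_add_distrib,
        Finset.sum_add_distrib]
    rw [← Finset.mul_sum, z1, mul_zero]
    have p3 : (∑ u : Fin n,
        ((1/((n:ℝ)-2))^2*(2*((n:ℝ)-4)*(∑ q : Fin n, E u q * E q u)
          + 2*(∑ c : Fin n, ∑ d : Fin n, (E c d)^2) * kd u u)))
        = (1/((n:ℝ)-2))^2*(2*((n:ℝ)-4)*(∑ c : Fin n, ∑ d : Fin n, (E c d)^2)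
          + 2*(∑ c : Fin n, ∑ d : Fin n, (E c d)^2) * (n:ℝ)) := by
      rw [← Finset.mul_sum, Finset.sum_add_distrib, ← Finset.mul_sum, ← Finset.mul_sum,
          hFtr, hkdd]
    rw [p3]
    have p4 : (∑ u : Fin n, 4*(1/((n:ℝ)-2))*(R/((n:ℝ)*((n:ℝ)-1)))*((n:ℝ)-2)*E u u) = 0 := by
      rw [show (∑ u : Fin n, 4*(1/((n:ℝ)-2))*(R/((n:ℝ)*((n:ℝ)-1)))*((n:ℝ)-2)*E u u)
          = ∑ u : Fin n, (4*(1/((n:ℝ)-2))*(R/((n:ℝ)*((n:ℝ)-1)))*((n:ℝ)-2))*E u u from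
          Finset.sum_congr rfl fun u _ => by ring, htr2]
    rw [p4]
    have p5 : (∑ u : Fin n, 2*((n:ℝ)-1)*(R/((n:ℝ)*((n:ℝ)-1)))^2*kd u u) = 2*((n:ℝ)-1)*(R/((n:ℝ)*((n:ℝ)-1)))^2*(n:ℝ) := by
      rw [show (∑ u : Fin n, 2*((n:ℝ)-1)*(R/((n:ℝ)*((n:ℝ)-1)))^2*kd u u)
          = ∑ u : Fin n, (2*((n:ℝ)-1)*(R/((n:ℝ)*((n:ℝ)-1)))^2)*kd u u from
          Finset.sum_congr rfl fun u _ => by ring, ← Finset.mul_sum, hkdd]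
    rw [p5]
    have p1 : (∑ u : Fin n, ∑ p : Fin n, ∑ q : Fin n, ∑ r : Fin n, W u p q r * W u p q r)
        = ∑ a : Fin n, ∑ b : Fin n, ∑ c : Fin n, ∑ d : Fin n, (W a b c d) ^ 2 := by
      simp only [pow_two]
    rw [p1]
    ring
  intro i j
  rw [key i j, hsq]
  field_simp
  ring
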